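/- Let n ≥ 1, γ ∈ (0, 1/8), S₀ > 0, and let Ω ⊂ ℝⁿ be a bounded (γ, S₀)-Reifenberg flat domain. Then the following measure density conditions hold: (i) for every y ∈ Ω and every 0 < r ≤ S₀ one has vol(B_r(y)) ≤ (2/(1−γ))ⁿ · vol(B_r(y) ∩ Ω), and moreover (2/(1−γ))ⁿ ≤ (16/7)ⁿ; (ii) for every y ∈ ∂Ω and every 0 < r ≤ S₀ one has vol(Ωᶜ ∩ B_r(y)) ≥ ((1−γ)/2)ⁿ · vol(B_r(y)), and moreover ((1−γ)/2)ⁿ ≥ (7/16)ⁿ. Here vol denotes n-dimensional Lebesgue measure, B_r(y) the open Euclidean ball, and ∂Ω the topological boundary of Ω. -/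

import Mathlib

open MeasureTheory Metric Set

open MeasureTheory Metric Set

lemma abs_coord_le_norm {n : ℕ} (x : EuclideanSpace ℝ (Fin n)) (i : Fin n) : |x i| ≤ ‖x‖ := by
  rw [EuclideanSpace.norm_eq, ← Real.sqrt_sq_eq_abs]
  apply Real.sqrt_le_sqrt
  have := Finset.single_le_sum (f := fun j => ‖x j‖ ^ 2) (fun j _ => sq_nonneg _)
    (Finset.mem_univ i)
  simpa [Real.norm_eq_abs, sq_abs] using this

lemma norm_one_dim (x : EuclideanSpace ℝ (Fin 1)) (i : Fin 1) : ‖x‖ = |x i| := by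
  rw [EuclideanSpace.norm_eq]
  have hi : i = 0 := Subsingleton.elim i 0
  subst hi
  rw [Fin.sum_univ_one, Real.norm_eq_abs, sq_abs, Real.sqrt_sq_eq_abs]

lemma hyperplane_vol {n : ℕ} (i : Fin n) (a : ℝ) :
    volume {z : EuclideanSpace ℝ (Fin n) | z i = a} = 0 := by
  set K : Submodule ℝ (EuclideanSpace ℝ (Fin n)) :=
    LinearMap.ker ((EuclideanSpace.proj i : EuclideanSpace ℝ (Fin n) →L[ℝ] ℝ) : _ →ₗ[ℝ] ℝ) with hK
  have hKne : K ≠ ⊤ := by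
    intro h
    have hmem : EuclideanSpace.single i (1:ℝ) ∈ K := h ▸ Submodule.mem_top
    rw [hK, LinearMap.mem_ker] at hmem
    have : (EuclideanSpace.single i (1:ℝ)) i = 0 := hmem
    simp [EuclideanSpace.single_apply] at this
  have hK0 : volume (K : Set (EuclideanSpace ℝ (Fin n))) = 0 :=
    Measure.addHaar_submodule volume K hKne
  have hKmeas : NullMeasurableSet (K : Set (EuclideanSpace ℝ (Fin n))) volume :=
    (Submodule.closed_of_finiteDimensional K).measurableSet.nullMeasurableSet
  have hpre : {z : EuclideanSpace ℝ (Fin n) | z i = a}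
      = (fun z => z + (-(a • EuclideanSpace.single i (1:ℝ)))) ⁻¹' K := by
    ext z
    simp only [Set.mem_setOf_eq, Set.mem_preimage, SetLike.mem_coe, hK, LinearMap.mem_ker]
    change _ ↔ (z + -(a • EuclideanSpace.single i (1:ℝ))) i = 0
    rw [PiLp.add_apply, PiLp.neg_apply, PiLp.smul_apply, EuclideanSpace.single_apply]
    simp
    constructor <;> intro h <;> linarith
  rw [hpre, (measurePreserving_add_right volume _).measure_preimage hKmeas, hK0]

open MeasureTheory Metric Set

lemma isomEquiv_measurePreserving {n : ℕ}
    (T : EuclideanSpace ℝ (Fin n) ≃ᵢ EuclideanSpace ℝ (Fin n)) :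
    MeasurePreserving T volume volume := by
  have h : (T : EuclideanSpace ℝ (Fin n) → EuclideanSpace ℝ (Fin n))
      = (fun x => x + T 0) ∘ (T.toRealLinearIsometryEquiv) := by
    funext x
    simp [IsometryEquiv.toRealLinearIsometryEquiv_apply, sub_add_cancel]
  rw [h]
  exact (measurePreserving_add_right volume (T 0)).comp
    (T.toRealLinearIsometryEquiv.measurePreserving)

lemma ball_subset_domain {n : ℕ} {Ω : Set (EuclideanSpace ℝ (Fin n))} (hΩ : IsOpen Ω)
    {y : EuclideanSpace ℝ (Fin n)} (hy : y ∈ Ω) {s : ℝ}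
    (hdisj : ball y s ∩ frontier Ω = ∅) : ball y s ⊆ Ω := by
  rcases le_or_gt s 0 with hs | hs
  · rw [ball_eq_empty.2 hs]; exact empty_subset _
  apply IsPreconnected.subset_left_of_subset_union hΩ (isClosed_closure (s := Ω)).isOpen_compl
  · exact disjoint_compl_right.mono_left subset_closure
  · intro z hz
    by_cases hzc : z ∈ closure Ω
    · left
      by_contra hzo
      exact Set.eq_empty_iff_forall_notMem.mp hdisj z
        ⟨hz, by rw [hΩ.frontier_eq]; exact ⟨hzc, hzo⟩⟩
    · right; exact hzc
  · exact ⟨y, mem_ball_self hs, hy⟩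
  · exact (convex_ball y s).isPreconnected



lemma ball_le_two_half {n : ℕ} (c : EuclideanSpace ℝ (Fin n)) (R : ℝ) (i : Fin n) :
    volume (ball c R) ≤ 2 * volume (ball c R ∩ {z : EuclideanSpace ℝ (Fin n) | c i < z i}) := by
  set L : EuclideanSpace ℝ (Fin n) ≃ₗᵢ[ℝ] EuclideanSpace ℝ (Fin n) :=
    LinearIsometryEquiv.piLpCongrRight 2
      (fun j => if j = i then LinearIsometryEquiv.neg ℝ else LinearIsometryEquiv.refl ℝ ℝ) with hL
  have hLapp : ∀ (z : EuclideanSpace ℝ (Fin n)) (j : Fin n),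
      L z j = if j = i then -(z j) else z j := by
    intro z j
    rw [hL, LinearIsometryEquiv.piLpCongrRight_apply]
    by_cases h : j = i
    · subst h; simp
    · simp [h]
  set w : EuclideanSpace ℝ (Fin n) := (2 * c i) • EuclideanSpace.single i (1:ℝ) with hw
  set f : EuclideanSpace ℝ (Fin n) → EuclideanSpace ℝ (Fin n) := (fun x => x + w) ∘ L with hf
  have hfapp : ∀ (z : EuclideanSpace ℝ (Fin n)) (j : Fin n),
      f z j = if j = i then 2 * c i - z j else z j := by
    intro z j
    rw [hf]
    show (L z + w) j = _
    rw [PiLp.add_apply, hLapp, hw, PiLp.smul_apply, EuclideanSpace.single_apply]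
    by_cases h : j = i <;> simp [h] <;> ring
  have hnorm : ∀ z : EuclideanSpace ℝ (Fin n), ‖f z - c‖ = ‖z - c‖ := by
    intro z
    rw [EuclideanSpace.norm_eq, EuclideanSpace.norm_eq]
    congr 1
    refine Finset.sum_congr rfl fun j _ => ?_
    rw [PiLp.sub_apply, PiLp.sub_apply, hfapp]
    by_cases h : j = i
    · rw [if_pos h, h]
      simp only [Real.norm_eq_abs, sq_abs]
      ring
    · rw [if_neg h]
  have hfmp : MeasurePreserving f volume volume :=
    (measurePreserving_add_right volume w).comp L.measurePreserving
  have hmeas : MeasurableSet (ball c R ∩ {z : EuclideanSpace ℝ (Fin n) | c i < z i}) := by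
    refine (isOpen_ball.inter ?_).measurableSet
    exact isOpen_lt continuous_const (EuclideanSpace.proj i).continuous
  have hpre : f ⁻¹' (ball c R ∩ {z : EuclideanSpace ℝ (Fin n) | c i < z i})
      = ball c R ∩ {z : EuclideanSpace ℝ (Fin n) | z i < c i} := by
    ext z
    simp only [Set.mem_preimage, Set.mem_inter_iff, mem_ball, Set.mem_setOf_eq, dist_eq_norm]
    rw [hnorm z, hfapp z i, if_pos rfl]
    constructor
    · rintro ⟨h1, h2⟩; exact ⟨h1, by linarith⟩
    · rintro ⟨h1, h2⟩; exact ⟨h1, by linarith⟩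
  have hlt : volume (ball c R ∩ {z : EuclideanSpace ℝ (Fin n) | z i < c i})
      = volume (ball c R ∩ {z : EuclideanSpace ℝ (Fin n) | c i < z i}) := by
    rw [← hpre, hfmp.measure_preimage hmeas.nullMeasurableSet]
  have hcover : ball c R ⊆ (ball c R ∩ {z : EuclideanSpace ℝ (Fin n) | c i < z i})
      ∪ ((ball c R ∩ {z : EuclideanSpace ℝ (Fin n) | z i < c i})
        ∪ {z : EuclideanSpace ℝ (Fin n) | z i = c i}) := by
    intro z hz
    rcases lt_trichotomy (c i) (z i) with h | h | h
    · exact Or.inl ⟨hz, h⟩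
    · exact Or.inr (Or.inr h.symm)
    · exact Or.inr (Or.inl ⟨hz, h⟩)
  calc volume (ball c R)
      ≤ volume ((ball c R ∩ {z : EuclideanSpace ℝ (Fin n) | c i < z i})
        ∪ ((ball c R ∩ {z : EuclideanSpace ℝ (Fin n) | z i < c i})
          ∪ {z : EuclideanSpace ℝ (Fin n) | z i = c i})) := measure_mono hcover
    _ ≤ volume (ball c R ∩ {z : EuclideanSpace ℝ (Fin n) | c i < z i})
        + (volume (ball c R ∩ {z : EuclideanSpace ℝ (Fin n) | z i < c i})
          + volume {z : EuclideanSpace ℝ (Fin n) | z i = c i}) :=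
      le_trans (measure_union_le _ _) (by gcongr; exact measure_union_le _ _)
    _ = 2 * volume (ball c R ∩ {z : EuclideanSpace ℝ (Fin n) | c i < z i}) := by
        rw [hyperplane_vol, hlt, add_zero, two_mul]

set_option maxHeartbeats 1000000 in
lemma key_lower (n : ℕ) (hn : 1 ≤ n) (γ S₀ : ℝ)
    (hγ : γ ∈ Set.Ioo (0 : ℝ) (1/8)) (hS₀ : 0 < S₀)
    (Ω : Set (EuclideanSpace ℝ (Fin n)))
    (hΩopen : IsOpen Ω) (hΩbd : Bornology.IsBounded Ω)
    (hReif : ∀ x₀ ∈ frontier Ω, ∀ r : ℝ, 0 < r → r ≤ S₀ →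
      ∃ T : EuclideanSpace ℝ (Fin n) ≃ᵢ EuclideanSpace ℝ (Fin n),
        T x₀ = 0 ∧
        (ball (0 : EuclideanSpace ℝ (Fin n)) r ∩
            {y : EuclideanSpace ℝ (Fin n) | γ * r < y ⟨n - 1, (by omega : n - 1 < n + 0)⟩}
          ⊆ (T '' Ω) ∩ ball 0 r) ∧
        ((T '' Ω) ∩ ball 0 r ⊆
          ball (0 : EuclideanSpace ℝ (Fin n)) r ∩
            {y : EuclideanSpace ℝ (Fin n) | -(γ * r) < y ⟨n - 1, (by omega : n - 1 < n + 0)⟩})) :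
    ∀ y ∈ Ω, ∀ r : ℝ, 0 < r → r ≤ S₀ →
      ENNReal.ofReal (((1 - γ)/2*r)^n) * volume (ball (0 : EuclideanSpace ℝ (Fin n)) 1)
        ≤ volume (ball y r ∩ Ω) := by
  obtain ⟨hγ0, hγ8⟩ := hγ
  set i₀ : Fin n := ⟨n - 1, by omega⟩ with hi₀
  set e : EuclideanSpace ℝ (Fin n) := EuclideanSpace.single i₀ (1:ℝ) with he_def
  have he : ‖e‖ = 1 := by rw [he_def, EuclideanSpace.norm_single]; exact norm_one
  haveI : Nontrivial (EuclideanSpace ℝ (Fin n)) :=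
    ⟨⟨e, 0, fun h => by simpa [he_def, EuclideanSpace.norm_single] using congrArg norm h⟩⟩
  have volball : ∀ (c : EuclideanSpace ℝ (Fin n)) (ρ : ℝ), 0 ≤ ρ →
      volume (ball c ρ) = ENNReal.ofReal (ρ^n) * volume (ball (0:EuclideanSpace ℝ (Fin n)) 1) := by
    intro c ρ h
    rw [Measure.addHaar_ball volume c h, finrank_euclideanSpace_fin]
  intro y hy r hr hrS
  have h1γ : (0:ℝ) < 1 - γ := by linarith
  have hρ0 : (0:ℝ) < (1 - γ)/2*r := by positivity
  have hγr0 : (0:ℝ) < γ*r := mul_pos hγ0 hr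
  have hγr : γ*r < r/8 := by
    have := mul_lt_mul_of_pos_right hγ8 hr
    linarith
  set d := infDist y (frontier Ω) with hd_def
  by_cases hcase0 : (1-γ)/2*r ≤ d
  · -- interior case
    have hdisj : ball y ((1-γ)/2*r) ∩ frontier Ω = ∅ := by
      ext x
      simp only [Set.mem_inter_iff, mem_ball, Set.mem_empty_iff_false, iff_false, not_and]
      intro hx hxf
      have hle : infDist y (frontier Ω) ≤ dist y x := infDist_le_dist_of_mem hxf
      rw [dist_comm y x] at hle
      linarith
    have hsub : ball y ((1-γ)/2*r) ⊆ ball y r ∩ Ω := by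
      intro z hz
      exact ⟨ball_subset_ball (by linarith) hz, ball_subset_domain hΩopen hy hdisj hz⟩
    rw [← volball y _ hρ0.le]
    exact measure_mono hsub
  · push_neg at hcase0
    have hd : d < (1-γ)/2*r := hcase0
    -- frontier is nonempty and compact
    have hfne : (frontier Ω).Nonempty := by
      by_contra hne
      rw [Set.not_nonempty_iff_eq_empty] at hne
      have hclopen : IsClopen Ω := isClopen_iff_frontier_eq_empty.mpr hne
      haveI : PreconnectedSpace (EuclideanSpace ℝ (Fin n)) :=
        ⟨(convex_univ : Convex ℝ (Set.univ : Set (EuclideanSpace ℝ (Fin n)))).isPreconnected⟩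
      rcases isClopen_iff.mp hclopen with h | h
      · exact absurd (h ▸ hy) (Set.notMem_empty y)
      · obtain ⟨C, hC⟩ := isBounded_iff_forall_norm_le.mp hΩbd
        have hC0 : 0 ≤ C := le_trans (norm_nonneg _) (hC 0 (h ▸ Set.mem_univ 0))
        have := hC ((C+1) • e) (h ▸ Set.mem_univ _)
        rw [norm_smul, he, Real.norm_eq_abs, abs_of_pos (by linarith)] at this
        linarith
    have hfc : IsCompact (frontier Ω) :=
      isCompact_of_isClosed_isBounded isClosed_frontier
        (hΩbd.closure.subset frontier_subset_closure)
    obtain ⟨x₀, hx₀, hdx⟩ := hfc.exists_infDist_eq_dist hfne y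
    have hyx : y ≠ x₀ := by
      intro h
      rw [hΩopen.frontier_eq] at hx₀
      exact hx₀.2 (h ▸ hy)
    have hd0 : 0 < d := by rw [hd_def, hdx]; exact dist_pos.2 hyx
    have hballd : ball y d ⊆ Ω := by
      apply ball_subset_domain hΩopen hy
      ext x
      simp only [Set.mem_inter_iff, mem_ball, Set.mem_empty_iff_false, iff_false, not_and]
      intro hx hxf
      have hle : infDist y (frontier Ω) ≤ dist y x := infDist_le_dist_of_mem hxf
      rw [dist_comm y x] at hle
      linarith
    obtain ⟨T, hT0, h1, h2⟩ := hReif x₀ hx₀ r hr hrS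
    obtain ⟨y', hy'eq⟩ : ∃ v, v = T y := ⟨_, rfl⟩
    have hdistsymm : ∀ z : EuclideanSpace ℝ (Fin n), dist (T.symm z) y = dist z y' := by
      intro z
      rw [hy'eq]
      conv_lhs => rw [show y = T.symm (T y) from (T.symm_apply_apply y).symm]
      exact T.symm.dist_eq _ _
    have hdistz : ∀ z : EuclideanSpace ℝ (Fin n), dist z y = dist (T z) y' := by
      intro z
      rw [hy'eq]
      exact (T.dist_eq z y).symm
    have hy'd : ‖y'‖ = d := by
      have h' : dist y' (T x₀) = dist y x₀ := by rw [hy'eq]; exact T.dist_eq y x₀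
      rw [hT0, dist_zero_right] at h'
      rw [h', hd_def, hdx]
    have hdr2 : 2*d < r := by linarith
    -- membership helpers
    have hmem : ∀ z : EuclideanSpace ℝ (Fin n), ‖z‖ < r → γ*r < z i₀ → T.symm z ∈ Ω := by
      intro z h1z h2z
      have hz : z ∈ (T '' Ω) ∩ ball 0 r := h1 ⟨mem_ball_zero_iff.2 h1z, h2z⟩
      obtain ⟨w, hw, hwz⟩ := hz.1
      have : T.symm z = w := by rw [← hwz, T.symm_apply_apply]
      rw [this]; exact hw
    have hup : ∀ z : EuclideanSpace ℝ (Fin n), ‖z‖ < r → z ∈ T '' Ω → -(γ*r) < z i₀ :=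
      fun z h1z h2z => (h2 ⟨h2z, mem_ball_zero_iff.2 h1z⟩).2
    -- lower bound on vertical coordinate of y'
    have hy'i : d - γ*r ≤ y' i₀ := by
      by_contra hcon
      push_neg at hcon
      set s := (max 0 (y' i₀ + γ*r) + d)/2 with hs_def
      have hmax0 : 0 ≤ max 0 (y' i₀ + γ*r) := le_max_left _ _
      have hmaxr : max 0 (y' i₀ + γ*r) ≤ max 0 (y' i₀ + γ*r) := le_refl _
      have hs0 : 0 < s := by rw [hs_def]; linarith
      have hsd : s < d := by
        have h1' : max 0 (y' i₀ + γ*r) < d := max_lt hd0 (by linarith)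
        rw [hs_def]; linarith
      have hsy : y' i₀ + γ*r < s := by
        have := le_max_right 0 (y' i₀ + γ*r)
        rw [hs_def]; linarith
      have hw'Ω : T.symm (y' - s • e) ∈ Ω := by
        apply hballd
        rw [mem_ball, hdistsymm, dist_eq_norm, sub_sub_cancel_left, norm_neg, norm_smul, he,
          Real.norm_eq_abs, abs_of_pos hs0, mul_one]
        exact hsd
      have hw'T : y' - s • e ∈ T '' Ω :=
        ⟨T.symm (y' - s • e), hw'Ω, T.apply_symm_apply _⟩
      have hw'n : ‖y' - s • e‖ < r := by
        calc ‖y' - s • e‖ ≤ ‖y'‖ + ‖s • e‖ := norm_sub_le _ _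
          _ = d + s := by rw [hy'd, norm_smul, he, Real.norm_eq_abs, abs_of_pos hs0, mul_one]
          _ < r := by linarith
      have hcoord := hup _ hw'n hw'T
      have : (y' - s • e) i₀ = y' i₀ - s := by
        rw [PiLp.sub_apply, PiLp.smul_apply, he_def, EuclideanSpace.single_apply, if_pos rfl]
        simp
      rw [this] at hcoord
      linarith
    by_cases hA : d^2 ≤ (1+γ)*r*(y' i₀)
    · -- Case A : single inscribed ball
      obtain ⟨c', hc'eq⟩ : ∃ v, v = EuclideanSpace.single i₀ ((1+γ)/2*r) := ⟨_, rfl⟩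
      have hc'n : ‖c'‖ = (1+γ)/2*r := by
        rw [hc'eq, EuclideanSpace.norm_single, Real.norm_eq_abs, abs_of_pos (by positivity)]
      have hc'i : c' i₀ = (1+γ)/2*r := by
        rw [hc'eq, EuclideanSpace.single_apply, if_pos rfl]
      have hinner : inner ℝ c' y' = (1+γ)/2*r * (y' i₀) := by
        rw [hc'eq, EuclideanSpace.inner_single_left]
        simp
      have hB : (0:ℝ) < (1+γ)/2*r := by positivity
      have hcy : ‖c' - y'‖ ≤ (1+γ)/2*r := by
        have hsq : ‖c' - y'‖^2 ≤ ((1+γ)/2*r)^2 := by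
          rw [norm_sub_sq_real, hc'n, hy'd, hinner]
          nlinarith [hA]
        nlinarith [norm_nonneg (c' - y'), hB]
      have hsub : ball (T.symm c') ((1-γ)/2*r) ⊆ ball y r ∩ Ω := by
        intro z hz
        rw [mem_ball] at hz
        have hzc : ‖T z - c'‖ < (1-γ)/2*r := by
          have h' : dist z (T.symm c') = dist (T z) c' := by
            conv_lhs => rw [show z = T.symm (T z) from (T.symm_apply_apply z).symm]
            exact T.symm.dist_eq _ _
          rw [h', dist_eq_norm] at hz
          exact hz
        have hco := abs_coord_le_norm (T z - c') i₀
        rw [PiLp.sub_apply, hc'i] at hco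
        have habs := abs_lt.mp (lt_of_le_of_lt hco hzc)
        have hzi : γ*r < (T z) i₀ := by linarith [habs.1]
        have hzn : ‖T z‖ < r := by
          have hsum : c' + (T z - c') = T z := by abel
          have h' := norm_add_le c' (T z - c')
          rw [hsum] at h'
          linarith [hc'n]
        refine ⟨?_, ?_⟩
        · rw [mem_ball, hdistz z]
          calc dist (T z) y' ≤ dist (T z) c' + dist c' y' := dist_triangle _ _ _
            _ < (1-γ)/2*r + (1+γ)/2*r := by
                rw [dist_eq_norm, dist_eq_norm]
                exact add_lt_add_of_lt_of_le hzc hcy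
            _ = r := by ring
        · have := hmem (T z) hzn hzi
          rwa [T.symm_apply_apply] at this
      rw [← volball (T.symm c') _ hρ0.le]
      exact measure_mono hsub
    · push_neg at hA
      have hA' : (1+γ)*r*(d - γ*r) < d^2 := by
        have hmul : (1+γ)*r*(d - γ*r) ≤ (1+γ)*r*(y' i₀) :=
          mul_le_mul_of_nonneg_left hy'i (by positivity)
        linarith
      have hd5 : d < r/5 := by
        by_contra h5
        push_neg at h5
        nlinarith [mul_nonneg (by linarith : (0:ℝ) ≤ d - r/5)
            (by linarith : (0:ℝ) ≤ (1-γ)/2*r - d),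
          mul_nonneg (by linarith : (0:ℝ) ≤ d - r/5) (by positivity : (0:ℝ) ≤ γ*r),
          mul_nonneg (by linarith : (0:ℝ) ≤ d - r/5) hr.le,
          mul_nonneg (by linarith : (0:ℝ) ≤ 1/8 - γ) (mul_pos hr hr).le,
          mul_nonneg (mul_nonneg (by linarith : (0:ℝ) ≤ 1/8 - γ) hγ0.le) (mul_pos hr hr).le,
          mul_pos hr hr, mul_pos hγ0 hr]
      by_cases hn2 : 2 ≤ n
      · -- Case B, dimension at least 2 : shifted half-ball
        obtain ⟨m, hmeq⟩ : ∃ v : ℝ, v = max (γ*r - y' i₀) 0 := ⟨_, rfl⟩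
        have hm0 : 0 ≤ m := hmeq ▸ le_max_right _ _
        have hm1 : γ*r - y' i₀ ≤ m := hmeq ▸ le_max_left _ _
        have hm2 : m ≤ 2*(γ*r) := by
          rw [hmeq]
          exact max_le (by linarith) (by positivity)
        obtain ⟨q, hqeq⟩ : ∃ v, v = y' + m • e := ⟨_, rfl⟩
        have hqi : γ*r ≤ q i₀ := by
          have hq' : q i₀ = y' i₀ + m * 1 := by
            rw [hqeq, PiLp.add_apply, PiLp.smul_apply, he_def, EuclideanSpace.single_apply,
              if_pos rfl, smul_eq_mul]
          rw [hq']
          linarith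
        have hqy : ‖q - y'‖ ≤ 2*(γ*r) := by
          rw [hqeq, add_sub_cancel_left, norm_smul, he, Real.norm_eq_abs, abs_of_nonneg hm0,
            mul_one]
          exact hm2
        have hqn : ‖q‖ ≤ d + 2*(γ*r) := by
          calc ‖q‖ = ‖y' + m • e‖ := by rw [hqeq]
            _ ≤ ‖y'‖ + ‖m • e‖ := norm_add_le _ _
            _ ≤ d + 2*(γ*r) := by
                rw [hy'd, norm_smul, he, Real.norm_eq_abs, abs_of_nonneg hm0, mul_one]
                linarith
        obtain ⟨cst, hcsteq⟩ : ∃ v, v = (1/4 : ℝ) • q + (3/4*(γ*r)) • e := ⟨_, rfl⟩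
        have hcsti : γ*r ≤ cst i₀ := by
          have hc' : cst i₀ = 1/4 * q i₀ + 3/4*(γ*r) * 1 := by
            rw [hcsteq, PiLp.add_apply, PiLp.smul_apply, PiLp.smul_apply, he_def,
              EuclideanSpace.single_apply, if_pos rfl, smul_eq_mul, smul_eq_mul]
          rw [hc']
          linarith
        have hcstn : ‖cst‖ ≤ d/4 + 5/4*(γ*r) := by
          calc ‖cst‖ ≤ ‖(1/4 : ℝ) • q‖ + ‖(3/4*(γ*r)) • e‖ := by
                rw [hcsteq]; exact norm_add_le _ _
            _ = 1/4 * ‖q‖ + 3/4*(γ*r) := by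
                rw [norm_smul, norm_smul, he, mul_one, Real.norm_eq_abs, Real.norm_eq_abs,
                  abs_of_pos (by norm_num : (0:ℝ) < 1/4), abs_of_pos (by positivity)]
            _ ≤ d/4 + 5/4*(γ*r) := by linarith [hqn]
        have hcsty : ‖cst - y'‖ ≤ 5/4*(γ*r) + 3/4*d := by
          have hdecomp : cst - y' = (1/4 : ℝ) • (q - y') + (3/4 : ℝ) • ((γ*r) • e - y') := by
            rw [hcsteq]
            module
          have hpart : ‖(γ*r) • e - y'‖ ≤ γ*r + d := by
            calc ‖(γ*r) • e - y'‖ ≤ ‖(γ*r) • e‖ + ‖y'‖ := norm_sub_le _ _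
              _ = γ*r + d := by
                  rw [norm_smul, he, mul_one, Real.norm_eq_abs, abs_of_pos (by positivity), hy'd]
          rw [hdecomp]
          calc ‖(1/4 : ℝ) • (q - y') + (3/4 : ℝ) • ((γ*r) • e - y')‖
              ≤ ‖(1/4 : ℝ) • (q - y')‖ + ‖(3/4 : ℝ) • ((γ*r) • e - y')‖ := norm_add_le _ _
            _ = 1/4 * ‖q - y'‖ + 3/4 * ‖(γ*r) • e - y'‖ := by
                rw [norm_smul, norm_smul, Real.norm_eq_abs, Real.norm_eq_abs,
                  abs_of_pos (by norm_num : (0:ℝ) < 1/4), abs_of_pos (by norm_num : (0:ℝ) < 3/4)]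
            _ ≤ 5/4*(γ*r) + 3/4*d := by linarith [hqy, hpart]
        obtain ⟨Rst, hRsteq⟩ : ∃ v : ℝ, v = 3/4*((1-γ)*r) := ⟨_, rfl⟩
        have hRst0 : 0 < Rst := by
          rw [hRsteq]
          nlinarith [mul_pos h1γ hr]
        have hproj : Continuous (fun z : EuclideanSpace ℝ (Fin n) => z i₀) :=
          (EuclideanSpace.proj i₀).continuous
        have hSmeas : MeasurableSet (ball cst Rst ∩
            {z : EuclideanSpace ℝ (Fin n) | cst i₀ < z i₀}) :=
          (isOpen_ball.inter (isOpen_lt continuous_const hproj)).measurableSet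
        have hSsub : ⇑T ⁻¹' (ball cst Rst ∩ {z : EuclideanSpace ℝ (Fin n) | cst i₀ < z i₀})
            ⊆ ball y r ∩ Ω := by
          intro z hz
          obtain ⟨hz1, hz2⟩ := hz
          rw [mem_ball, dist_eq_norm] at hz1
          have hzi : γ*r < (T z) i₀ := lt_of_le_of_lt hcsti hz2
          have hzn : ‖T z‖ < r := by
            have hsum : cst + (T z - cst) = T z := by abel
            have h' := norm_add_le cst (T z - cst)
            rw [hsum] at h'
            linarith [hcstn, hd5]
          refine ⟨?_, ?_⟩
          · rw [mem_ball, hdistz z]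
            calc dist (T z) y' ≤ dist (T z) cst + dist cst y' := dist_triangle _ _ _
              _ < Rst + (5/4*(γ*r) + 3/4*d) := by
                  rw [dist_eq_norm, dist_eq_norm]
                  exact add_lt_add_of_lt_of_le hz1 hcsty
              _ < r := by linarith [hd5]
          · have := hmem (T z) hzn hzi
            rwa [T.symm_apply_apply] at this
        have hvolS : volume (⇑T ⁻¹' (ball cst Rst ∩
              {z : EuclideanSpace ℝ (Fin n) | cst i₀ < z i₀}))
            = volume (ball cst Rst ∩ {z : EuclideanSpace ℝ (Fin n) | cst i₀ < z i₀}) :=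
          (isomEquiv_measurePreserving T).measure_preimage hSmeas.nullMeasurableSet
        have hhalf := ball_le_two_half cst Rst i₀
        have hnum : 2*((1-γ)/2*r)^n ≤ Rst^n := by
          have h32 : Rst = 3/2 * ((1-γ)/2*r) := by rw [hRsteq]; ring
          rw [h32, mul_pow (3/2 : ℝ) ((1-γ)/2*r) n]
          have h2n : (2:ℝ) ≤ (3/2)^n := by
            calc (2:ℝ) ≤ (3/2)^2 := by norm_num
              _ ≤ (3/2)^n := pow_le_pow_right₀ (by norm_num) hn2
          exact mul_le_mul_of_nonneg_right h2n (pow_nonneg hρ0.le n)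
        have hchain : 2 * (ENNReal.ofReal (((1-γ)/2*r)^n)
              * volume (ball (0:EuclideanSpace ℝ (Fin n)) 1))
            ≤ 2 * volume (ball cst Rst ∩ {z : EuclideanSpace ℝ (Fin n) | cst i₀ < z i₀}) := by
          calc 2 * (ENNReal.ofReal (((1-γ)/2*r)^n)
                * volume (ball (0:EuclideanSpace ℝ (Fin n)) 1))
              = ENNReal.ofReal (2*((1-γ)/2*r)^n)
                * volume (ball (0:EuclideanSpace ℝ (Fin n)) 1) := by
                rw [ENNReal.ofReal_mul (by norm_num : (0:ℝ) ≤ 2), ENNReal.ofReal_ofNat,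
                  mul_assoc]
            _ ≤ ENNReal.ofReal (Rst^n) * volume (ball (0:EuclideanSpace ℝ (Fin n)) 1) :=
                mul_le_mul_left (ENNReal.ofReal_le_ofReal hnum) _
            _ = volume (ball cst Rst) := (volball cst Rst hRst0.le).symm
            _ ≤ 2 * volume (ball cst Rst ∩ {z : EuclideanSpace ℝ (Fin n) | cst i₀ < z i₀}) :=
                hhalf
        have hfinal := (ENNReal.mul_le_mul_iff_right (two_ne_zero) ENNReal.ofNat_ne_top).mp hchain
        calc ENNReal.ofReal (((1-γ)/2*r)^n) * volume (ball (0:EuclideanSpace ℝ (Fin n)) 1)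
            ≤ volume (ball cst Rst ∩ {z : EuclideanSpace ℝ (Fin n) | cst i₀ < z i₀}) := hfinal
          _ = volume (⇑T ⁻¹' (ball cst Rst ∩
                {z : EuclideanSpace ℝ (Fin n) | cst i₀ < z i₀})) := hvolS.symm
          _ ≤ volume (ball y r ∩ Ω) := measure_mono hSsub
      · -- Case B, dimension 1 : two disjoint intervals
        have hn1 : n = 1 := by omega
        subst hn1
        have hdr : d < r := by linarith
        have hy'abs : |y' i₀| = d := by rw [← norm_one_dim y' i₀]; exact hy'd
        have hyi : y' i₀ = -d := by
          rcases (abs_eq hd0.le).mp hy'abs with h | h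
          · exfalso
            rw [h] at hA
            have hlt : d < (1+γ)*r := by nlinarith
            nlinarith [mul_pos hd0 (show (0:ℝ) < (1+γ)*r - d by linarith)]
          · exact h
        have h2d : 2*d ≤ γ*r := by linarith [hy'i]
        obtain ⟨ρ₁, hρ₁eq⟩ : ∃ v : ℝ, v = ((1-γ)*r - d)/2 := ⟨_, rfl⟩
        have hρ₁0 : 0 < ρ₁ := by
          rw [hρ₁eq]
          linarith
        obtain ⟨m₁, hm₁eq⟩ : ∃ v : ℝ, v = (γ*r + (r - d))/2 := ⟨_, rfl⟩
        obtain ⟨c₁, hc₁eq⟩ : ∃ v, v = EuclideanSpace.single i₀ m₁ := ⟨_, rfl⟩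
        have hc₁i : c₁ i₀ = m₁ := by rw [hc₁eq, EuclideanSpace.single_apply, if_pos rfl]
        have hcoord1 : ∀ z, dist z (T.symm c₁) < ρ₁ → γ*r < (T z) i₀ ∧ (T z) i₀ < r - d := by
          intro z hz
          have h' : dist z (T.symm c₁) = dist (T z) c₁ := by
            conv_lhs => rw [show z = T.symm (T z) from (T.symm_apply_apply z).symm]
            exact T.symm.dist_eq _ _
          rw [h', dist_eq_norm] at hz
          have hco := abs_coord_le_norm (T z - c₁) i₀
          rw [PiLp.sub_apply, hc₁i] at hco
          have habs := abs_lt.mp (lt_of_le_of_lt hco hz)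
          have hml : m₁ - ρ₁ = γ*r := by rw [hm₁eq, hρ₁eq]; ring
          have hmh : m₁ + ρ₁ = r - d := by rw [hm₁eq, hρ₁eq]; ring
          constructor
          · linarith [habs.1]
          · linarith [habs.2]
        have hB₁ : ball (T.symm c₁) ρ₁ ⊆ ball y r ∩ Ω := by
          intro z hz
          rw [mem_ball] at hz
          obtain ⟨hlo, hhi⟩ := hcoord1 z hz
          have hzn : ‖T z‖ < r := by
            rw [norm_one_dim (T z) i₀, abs_lt]
            constructor
            · linarith
            · linarith [hd0]
          refine ⟨?_, ?_⟩
          · rw [mem_ball, hdistz z, dist_eq_norm, norm_one_dim (T z - y') i₀, PiLp.sub_apply,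
              hyi, sub_neg_eq_add, abs_lt]
            constructor
            · linarith
            · linarith
          · have := hmem (T z) hzn hlo
            rwa [T.symm_apply_apply] at this
        have hB₂ : ball y d ⊆ ball y r ∩ Ω := by
          intro z hz
          exact ⟨ball_subset_ball hdr.le hz, hballd hz⟩
        have hdisjB : Disjoint (ball (T.symm c₁) ρ₁) (ball y d) := by
          rw [Set.disjoint_left]
          intro z hz1 hz2
          rw [mem_ball] at hz1 hz2
          obtain ⟨hlo, _⟩ := hcoord1 z hz1
          rw [hdistz z, dist_eq_norm] at hz2
          have hco := abs_coord_le_norm (T z - y') i₀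
          rw [PiLp.sub_apply, hyi, sub_neg_eq_add] at hco
          have habs := abs_lt.mp (lt_of_le_of_lt hco hz2)
          linarith [habs.2]
        have hunion : ball (T.symm c₁) ρ₁ ∪ ball y d ⊆ ball y r ∩ Ω := union_subset hB₁ hB₂
        calc ENNReal.ofReal (((1-γ)/2*r)^1) * volume (ball (0:EuclideanSpace ℝ (Fin 1)) 1)
            ≤ ENNReal.ofReal (ρ₁^1 + d^1) * volume (ball (0:EuclideanSpace ℝ (Fin 1)) 1) := by
              apply mul_le_mul_left
              apply ENNReal.ofReal_le_ofReal
              rw [pow_one, pow_one, pow_one, hρ₁eq]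
              linarith
          _ = ENNReal.ofReal (ρ₁^1) * volume (ball (0:EuclideanSpace ℝ (Fin 1)) 1)
              + ENNReal.ofReal (d^1) * volume (ball (0:EuclideanSpace ℝ (Fin 1)) 1) := by
              rw [ENNReal.ofReal_add (le_of_lt (pow_pos hρ₁0 1)) (pow_nonneg hd0.le 1), add_mul]
          _ = volume (ball (T.symm c₁) ρ₁) + volume (ball y d) := by
              rw [volball _ _ hρ₁0.le, volball _ _ hd0.le]
          _ = volume (ball (T.symm c₁) ρ₁ ∪ ball y d) :=
              (measure_union hdisjB measurableSet_ball).symm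
          _ ≤ volume (ball y r ∩ Ω) := measure_mono hunion

/-- **Measure density for Reifenberg flat domains.**
If `Ω ⊆ ℝⁿ` is a bounded `(γ, S₀)`-Reifenberg flat domain with `γ ∈ (0,1/8)`, then the
measure density conditions hold: for every `y ∈ Ω` and `0 < r ≤ S₀`,
`vol(B_r(y)) ≤ (2/(1-γ))ⁿ vol(B_r(y) ∩ Ω)` with `(2/(1-γ))ⁿ ≤ (16/7)ⁿ`, and for every
`y ∈ ∂Ω` and `0 < r ≤ S₀`, `vol(Ωᶜ ∩ B_r(y)) ≥ ((1-γ)/2)ⁿ vol(B_r(y))` with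
`((1-γ)/2)ⁿ ≥ (7/16)ⁿ`. -/
theorem stmt0 (n : ℕ) (hn : 1 ≤ n) (γ S₀ : ℝ)
    (hγ : γ ∈ Set.Ioo (0 : ℝ) (1/8)) (hS₀ : 0 < S₀)
    (Ω : Set (EuclideanSpace ℝ (Fin n)))
    (hΩopen : IsOpen Ω) (hΩbd : Bornology.IsBounded Ω)
    (hReif : ∀ x₀ ∈ frontier Ω, ∀ r : ℝ, 0 < r → r ≤ S₀ →
      ∃ T : EuclideanSpace ℝ (Fin n) ≃ᵢ EuclideanSpace ℝ (Fin n),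
        T x₀ = 0 ∧
        (ball (0 : EuclideanSpace ℝ (Fin n)) r ∩
            {y : EuclideanSpace ℝ (Fin n) | γ * r < y ⟨n - 1, by omega⟩}
          ⊆ (T '' Ω) ∩ ball 0 r) ∧
        ((T '' Ω) ∩ ball 0 r ⊆
          ball (0 : EuclideanSpace ℝ (Fin n)) r ∩
            {y : EuclideanSpace ℝ (Fin n) | -(γ * r) < y ⟨n - 1, by omega⟩})) :
    (∀ y ∈ Ω, ∀ r : ℝ, 0 < r → r ≤ S₀ →
      volume (ball y r) ≤ ENNReal.ofReal ((2 / (1 - γ)) ^ n) * volume (ball y r ∩ Ω)) ∧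
    ((2 / (1 - γ)) ^ n ≤ (16 / 7 : ℝ) ^ n) ∧
    (∀ y ∈ frontier Ω, ∀ r : ℝ, 0 < r → r ≤ S₀ →
      ENNReal.ofReal (((1 - γ) / 2) ^ n) * volume (ball y r) ≤ volume (Ωᶜ ∩ ball y r)) ∧
    ((7 / 16 : ℝ) ^ n ≤ ((1 - γ) / 2) ^ n) := by
  have hγ0 : 0 < γ := hγ.1
  have hγ8 : γ < 1/8 := hγ.2
  have h1γ : (0:ℝ) < 1 - γ := by linarith
  set i₀ : Fin n := ⟨n - 1, by omega⟩ with hi₀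
  haveI : Nontrivial (EuclideanSpace ℝ (Fin n)) :=
    ⟨⟨EuclideanSpace.single i₀ (1:ℝ), 0,
      fun h => by simpa [EuclideanSpace.norm_single] using congrArg norm h⟩⟩
  have volball : ∀ (c : EuclideanSpace ℝ (Fin n)) (ρ : ℝ), 0 ≤ ρ →
      volume (ball c ρ)
        = ENNReal.ofReal (ρ^n) * volume (ball (0:EuclideanSpace ℝ (Fin n)) 1) := by
    intro c ρ h
    rw [Measure.addHaar_ball volume c h, finrank_euclideanSpace_fin]
  refine ⟨?_, ?_, ?_, ?_⟩
  · -- measure density inside the domain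
    intro y hy r hr hrS
    have hkey := key_lower n hn γ S₀ hγ hS₀ Ω hΩopen hΩbd hReif y hy r hr hrS
    have hvol : volume (ball y r)
        = ENNReal.ofReal (r^n) * volume (ball (0:EuclideanSpace ℝ (Fin n)) 1) :=
      volball y r hr.le
    have hmulpow : (2/(1-γ))^n * ((1-γ)/2*r)^n = r^n := by
      rw [← mul_pow]
      congr 1
      field_simp
    rw [hvol, ← hmulpow, ENNReal.ofReal_mul (pow_nonneg (div_nonneg (by norm_num) h1γ.le) n),
      mul_assoc]
    exact mul_le_mul_right hkey _
  · -- first numeric bound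
    have h716 : (2:ℝ)/(1-γ) ≤ 16/7 := by
      rw [div_le_div_iff₀ h1γ (by norm_num)]
      linarith
    exact pow_le_pow_left₀ (div_nonneg (by norm_num) h1γ.le) h716 n
  · -- measure density of the complement at the boundary
    intro y hy r hr hrS
    obtain ⟨T, hT0, h1, h2⟩ := hReif y hy r hr hrS
    obtain ⟨w, hweq⟩ : ∃ v, v = EuclideanSpace.single i₀ (-((1+γ)/2*r)) := ⟨_, rfl⟩
    have hwn : ‖w‖ = (1+γ)/2*r := by
      rw [hweq, EuclideanSpace.norm_single, Real.norm_eq_abs, abs_neg,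
        abs_of_pos (by positivity)]
    have hwi : w i₀ = -((1+γ)/2*r) := by
      rw [hweq, EuclideanSpace.single_apply, if_pos rfl]
    have hρ0 : (0:ℝ) < (1-γ)/2*r := by positivity
    have hsub : ball (T.symm w) ((1-γ)/2*r) ⊆ Ωᶜ ∩ ball y r := by
      intro z hz
      rw [mem_ball] at hz
      have hzc : ‖T z - w‖ < (1-γ)/2*r := by
        have h' : dist z (T.symm w) = dist (T z) w := by
          conv_lhs => rw [show z = T.symm (T z) from (T.symm_apply_apply z).symm]
          exact T.symm.dist_eq _ _
        rw [h', dist_eq_norm] at hz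
        exact hz
      have hzn : ‖T z‖ < r := by
        have hsum : w + (T z - w) = T z := by abel
        have h' := norm_add_le w (T z - w)
        rw [hsum] at h'
        linarith [hwn]
      have hco := abs_coord_le_norm (T z - w) i₀
      rw [PiLp.sub_apply, hwi, sub_neg_eq_add] at hco
      have habs := abs_lt.mp (lt_of_le_of_lt hco hzc)
      have hzi : (T z) i₀ < -(γ*r) := by linarith [habs.2]
      refine ⟨?_, ?_⟩
      · intro hzΩ
        have hmem : T z ∈ (⇑T '' Ω) ∩ ball 0 r := ⟨⟨z, hzΩ, rfl⟩, mem_ball_zero_iff.2 hzn⟩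
        have hup := (h2 hmem).2
        simp only [Set.mem_setOf_eq] at hup
        linarith
      · rw [mem_ball]
        have h' : dist z y = dist (T z) (T y) := (T.dist_eq z y).symm
        rw [h', hT0, dist_zero_right]
        exact hzn
    calc ENNReal.ofReal (((1-γ)/2)^n) * volume (ball y r)
        = ENNReal.ofReal (((1-γ)/2)^n * r^n)
            * volume (ball (0:EuclideanSpace ℝ (Fin n)) 1) := by
          rw [volball y r hr.le,
            ENNReal.ofReal_mul (pow_nonneg (div_nonneg h1γ.le (by norm_num)) n), mul_assoc]
      _ = volume (ball (T.symm w) ((1-γ)/2*r)) := by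
          rw [volball _ _ hρ0.le, ← mul_pow]
      _ ≤ volume (Ωᶜ ∩ ball y r) := measure_mono hsub
  · -- second numeric bound
    exact pow_le_pow_left₀ (by norm_num) (by linarith) n
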